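/- Let a ≤ b be real numbers, Z : ℂ → ℂ and φ : ℝ → ℂ. Assume that for every t ∈ [a,b]: Z is complex-differentiable at φ(t); φ has derivative 2 · Z(φ(t)) · conj(deriv Z (φ(t))) at t (i.e. φ is a trajectory of the gradient flow of |Z|²); and Z(φ(t)) ≠ 0. Then the phase of Z is constant along φ: for all t ∈ [a,b], |Z(φ(a))| · Z(φ(t)) = |Z(φ(t))| · Z(φ(a)). -/

import Mathlib

/-- Along a trajectory of the gradient flow `φ' = 2·Z(φ)·conj(Z'(φ))` of `|Z|²`, the phase
of `Z` is constant: `|Z(φ a)|·Z(φ t) = |Z(φ t)|·Z(φ a)` for all `t ∈ [a,b]`. -/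
theorem phase_constant_along_gradient_flow
    (a b : ℝ) (hab : a ≤ b) (Z : ℂ → ℂ) (φ : ℝ → ℂ)
    (hZ : ∀ t ∈ Set.Icc a b, DifferentiableAt ℂ Z (φ t))
    (hφ : ∀ t ∈ Set.Icc a b,
      HasDerivAt φ (2 * Z (φ t) * (starRingEnd ℂ) (deriv Z (φ t))) t)
    (hne : ∀ t ∈ Set.Icc a b, Z (φ t) ≠ 0) :
    ∀ t ∈ Set.Icc a b,
      (‖Z (φ a)‖ : ℂ) * Z (φ t) = (‖Z (φ t)‖ : ℂ) * Z (φ a) := by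
  set g : ℝ → ℂ := fun t => Z (φ t) with hgdef
  set c : ℝ → ℝ := fun t => 2 * ‖deriv Z (φ t)‖ ^ 2 with hcdef
  set r : ℝ → ℝ := fun t => Complex.normSq (g t) with hrdef
  have hrpos : ∀ t ∈ Set.Icc a b, 0 < r t := fun t ht =>
    Complex.normSq_pos.mpr (hne t ht)
  have hspos : ∀ t ∈ Set.Icc a b, 0 < Real.sqrt (r t) := fun t ht =>
    Real.sqrt_pos.mpr (hrpos t ht)
  -- derivative of g
  have hg : ∀ t ∈ Set.Icc a b, HasDerivAt g ((c t : ℂ) * g t) t := by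
    intro t ht
    have h1 := ((hZ t ht).hasDerivAt.hasFDerivAt.restrictScalars ℝ).comp_hasDerivAt t (hφ t ht)
    convert h1 using 1
    case e'_4 => rfl
    case e'_8 => rfl
    simp only [ContinuousLinearMap.coe_restrictScalars', ContinuousLinearMap.smulRight_apply,
      ContinuousLinearMap.one_apply, smul_eq_mul, hcdef, hgdef,
      ContinuousLinearMap.toSpanSingleton_apply]
    push_cast
    rw [← Complex.ofReal_pow, Complex.sq_norm]
    rw [show ((Complex.normSq (deriv Z (φ t)) : ℂ)) =
      (starRingEnd ℂ) (deriv Z (φ t)) * deriv Z (φ t) by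
        rw [mul_comm, Complex.mul_conj]]
    ring
  -- derivative of r
  have hr : ∀ t ∈ Set.Icc a b, HasDerivAt r (2 * c t * r t) t := by
    intro t ht
    have hre : HasDerivAt (fun t => (g t).re) (((c t : ℂ) * g t).re) t :=
      Complex.reCLM.hasFDerivAt.comp_hasDerivAt t (hg t ht)
    have him : HasDerivAt (fun t => (g t).im) (((c t : ℂ) * g t).im) t :=
      Complex.imCLM.hasFDerivAt.comp_hasDerivAt t (hg t ht)
    have h2 := (hre.mul hre).add (him.mul him)
    have heq : ∀ s : ℝ, r s = (g s).re * (g s).re + (g s).im * (g s).im := fun s => by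
      simp [hrdef, Complex.normSq_apply]
    rw [funext heq] at *
    convert h2 using 1
    case e'_4 => rfl
    case e'_5 => rfl
    case e'_8 => rfl
    simp only [Complex.mul_re, Complex.mul_im, Complex.ofReal_re, Complex.ofReal_im]
    ring
  -- derivative of sqrt ∘ r
  have hs : ∀ t ∈ Set.Icc a b,
      HasDerivAt (fun u => Real.sqrt (r u)) (c t * Real.sqrt (r t)) t := by
    intro t ht
    have := (hr t ht).sqrt (hrpos t ht).ne'
    convert this using 1
    have hsq : Real.sqrt (r t) * Real.sqrt (r t) = r t :=
      Real.mul_self_sqrt (hrpos t ht).le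
    rw [eq_div_iff (mul_ne_zero two_ne_zero (hspos t ht).ne')]
    linear_combination (2 * c t) * hsq
  -- the phase is constant
  set p : ℝ → ℂ := fun t => (Real.sqrt (r t))⁻¹ • g t with hpdef
  have hp : ∀ t ∈ Set.Icc a b, HasDerivAt p 0 t := by
    intro t ht
    have hinv := (hs t ht).inv (hspos t ht).ne'
    have h3 := hinv.smul (hg t ht)
    convert h3 using 1
    case e'_4 => rfl
    case e'_8 => rfl
    rw [show (c t : ℂ) * g t = (c t) • g t from (Complex.real_smul).symm]
    have hsne := (hspos t ht).ne'
    rw [smul_smul, ← add_smul]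
    rw [Pi.inv_apply]
    rw [show (Real.sqrt (r t))⁻¹ * c t + -(c t * Real.sqrt (r t)) / Real.sqrt (r t) ^ 2 = 0 by
      field_simp; ring]
    simp
  have hconst : ∀ t ∈ Set.Icc a b, p t = p a := by
    apply constant_of_has_deriv_right_zero
    · exact fun t ht => (hp t ht).continuousAt.continuousWithinAt
    · exact fun t ht => (hp t (Set.Ico_subset_Icc_self ht)).hasDerivWithinAt
  intro t ht
  have h4 := hconst t ht
  have ha : a ∈ Set.Icc a b := Set.left_mem_Icc.mpr hab
  have hA : Real.sqrt (r a) = ‖g a‖ := (Complex.norm_def _).symm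
  have hT : Real.sqrt (r t) = ‖g t‖ := (Complex.norm_def _).symm
  have h5 : (Real.sqrt (r a) * Real.sqrt (r t)) • p t
      = (Real.sqrt (r a) * Real.sqrt (r t)) • p a := by rw [h4]
  simp only [hpdef, smul_smul] at h5
  rw [mul_inv_cancel_right₀ (hspos t ht).ne', mul_comm (Real.sqrt (r a)) (Real.sqrt (r t)),
    mul_inv_cancel_right₀ (hspos a ha).ne'] at h5
  rw [hA, hT] at h5
  simpa [Complex.real_smul, hgdef] using h5
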